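/- A left module structure over a monad (E, d, s, ·, e₀) on A in Mly(Set), carried by an automaton (P, δ : A × P → P, σ : A × P → X) with action ξ : E × P → P satisfying the unit law ξ(e₀, p) = p, associativity ξ(e·e', p) = ξ(e, ξ(e', p)), and the cell axioms σ(a, ξ(e,p)) = σ(s(a,e), p) and δ(a, ξ(e,p)) = ξ(d(a,e), δ(s(a,e), p)), determines a left action of the bicrossed product monoid E ⋈ A* on P, given by ((x, as), p) ↦ ξ(x, δ⁺(as, p)), where δ⁺ is the canonical extension of δ to lists. -/
import Mathlib


/-- Canonical extension of `d : A → E → E` to lists. -/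
def dPlus {A E : Type*} (d : A → E → E) : List A → E → E
  | [], e => e
  | a :: as, e => d a (dPlus d as e)

/-- Canonical extension of `s` to a map `List A × E → List A`. -/
def odPlus {A E : Type*} (d : A → E → E) (s : A → E → A) : List A → E → List A
  | [], _ => []
  | a :: as, e => s a (dPlus d as e) :: odPlus d s as e

/-- The semifree bicrossed product multiplication on `E × List A`. -/
def sfMul {A E : Type*} [Monoid E] (d : A → E → E) (s : A → E → A)
    (p q : E × List A) : E × List A :=
  (p.1 * dPlus d p.2 q.1, odPlus d s p.2 q.1 ++ q.2)

lemma dPlus_append {A P : Type*} (δ : A → P → P) (l₁ l₂ : List A) (p : P) :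
    dPlus δ (l₁ ++ l₂) p = dPlus δ l₁ (dPlus δ l₂ p) := by
  induction l₁ with
  | nil => rfl
  | cons a as ih => simp [dPlus, ih]

theorem module_gives_bicrossed_action {A E P X : Type*} [Monoid E]
    (d : A → E → E) (s : A → E → A)
    (hs1 : ∀ a : A, s a 1 = a)
    (hd1 : ∀ a : A, d a 1 = 1)
    (hs2 : ∀ (a : A) (e e' : E), s a (e * e') = s (s a e) e')
    (hd2 : ∀ (a : A) (e e' : E), d a (e * e') = d a e * d (s a e) e')
    (δ : A → P → P) (σ : A → P → X) (ξ : E → P → P)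
    (hξ_one : ∀ p : P, ξ 1 p = p)
    (hξ_mul : ∀ (e e' : E) (p : P), ξ (e * e') p = ξ e (ξ e' p))
    (hcell_s : ∀ (a : A) (e : E) (p : P), σ a (ξ e p) = σ (s a e) p)
    (hcell_d : ∀ (a : A) (e : E) (p : P), δ a (ξ e p) = ξ (d a e) (δ (s a e) p)) :
    -- ((x, as), p) ↦ ξ x (δ⁺ as p) is a left action of E ⋈ A* on P
    (∀ p : P, ξ (1 : E) (dPlus δ ([] : List A) p) = p) ∧
    (∀ (q q' : E × List A) (p : P),
      ξ (sfMul d s q q').1 (dPlus δ (sfMul d s q q').2 p) =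
        ξ q.1 (dPlus δ q.2 (ξ q'.1 (dPlus δ q'.2 p)))) := by
  have key : ∀ (as : List A) (e : E) (p : P),
      dPlus δ as (ξ e p) = ξ (dPlus d as e) (dPlus δ (odPlus d s as e) p) := by
    intro as
    induction as with
    | nil => intro e p; rfl
    | cons a as ih =>
      intro e p
      simp only [dPlus, odPlus, ih, hcell_d]
  refine ⟨fun p => hξ_one p, fun q q' p => ?_⟩
  simp only [sfMul, dPlus_append, hξ_mul]
  rw [key]
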